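/- Let g be C^2, even, convex, with g' strictly increasing, odd, and unbounded, and suppose V·g''(V) is bounded on (0,∞). Let λ(V₁) be the unique tie point for the double bubble problem. Then λ(V₁)/V₁ → ∞ as V₁ → ∞. -/

import Mathlib

open Filter

/-- Tangent line inequality for a differentiable function with monotone derivative. -/
lemma tangent_le_aux (g : ℝ → ℝ) (hd : Differentiable ℝ g) (hm : Monotone (deriv g))
    (x y : ℝ) : g x + deriv g x * (y - x) ≤ g y := by
  rcases lt_trichotomy x y with h | h | h
  · obtain ⟨c, hc, hderiv⟩ := exists_deriv_eq_slope g h hd.continuous.continuousOn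
      (hd.differentiableOn)
    have h1 : deriv g x ≤ deriv g c := hm hc.1.le
    have h2 : deriv g c * (y - x) = g y - g x := by
      rw [hderiv, div_mul_cancel₀ _ (sub_ne_zero.2 h.ne')]
    nlinarith [sub_pos.2 h]
  · subst h; simp
  · obtain ⟨c, hc, hderiv⟩ := exists_deriv_eq_slope g h hd.continuous.continuousOn
      (hd.differentiableOn)
    have h1 : deriv g c ≤ deriv g x := hm hc.2.le
    have h2 : deriv g c * (x - y) = g x - g y := by
      rw [hderiv, div_mul_cancel₀ _ (sub_ne_zero.2 h.ne')]
    nlinarith [sub_pos.2 h]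

lemma sqrt_tendsto_atTop : Filter.Tendsto Real.sqrt atTop atTop := by
  rw [tendsto_atTop]
  intro b
  filter_upwards [eventually_ge_atTop ((max b 0) ^ 2)] with x hx
  calc b ≤ max b 0 := le_max_left _ _
    _ = Real.sqrt ((max b 0) ^ 2) := (Real.sqrt_sq (le_max_right _ _)).symm
    _ ≤ Real.sqrt x := Real.sqrt_le_sqrt hx

/-- Superlinear growth of the tie function: for a `C²` even convex density `g` in
volume coordinates with `g'` strictly increasing, odd and unbounded, if `V·g''(V)` is
bounded on `(0,∞)` then the tie point satisfies `λ(V₁)/V₁ → ∞` as `V₁ → ∞`. -/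
theorem tie_function_superlinear (g : ℝ → ℝ) (hg : ContDiff ℝ 2 g)
    (hg_even : ∀ v, g (-v) = g v) (hg_convex : ConvexOn ℝ Set.univ g)
    (hg' : StrictMono (deriv g)) (hg'_odd : ∀ v, deriv g (-v) = -deriv g v)
    (hg'_unbdd : ∀ c : ℝ, ∃ x, c < deriv g x)
    (hg'' : ∃ C : ℝ, ∀ v > 0, v * deriv (deriv g) v ≤ C)
    (Vt : ℝ → ℝ → ℝ)
    (hVt : ∀ V₁ V₂, 0 < V₁ → V₁ ≤ V₂ →
      deriv g (Vt V₁ V₂) + deriv g (Vt V₁ V₂ + V₁) + deriv g (Vt V₁ V₂ + V₁ + V₂) = 0)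
    (μ : ℝ → ℝ → ℝ)
    (hμ : ∀ V₁ V₂, μ V₁ V₂ = 2 * (g (V₁ / 2) + g ((V₁ + V₂) / 2)) -
      (g (Vt V₁ V₂) + g (Vt V₁ V₂ + V₁) + g (Vt V₁ V₂ + V₁ + V₂)))
    (lam : ℝ → ℝ)
    (hlam : ∀ V₁ > 0, V₁ < lam V₁ ∧ μ V₁ (lam V₁) = 0) :
    Tendsto (fun V₁ => lam V₁ / V₁) atTop atTop := by
  obtain ⟨C, hC⟩ := hg''
  set C₁ : ℝ := max C 1 with hC₁def
  have hC₁pos : (0:ℝ) < C₁ := lt_of_lt_of_le one_pos (le_max_right _ _)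
  -- basic differentiability facts
  have hgdiff : Differentiable ℝ g := hg.differentiable (by norm_num)
  have hg1 : ContDiff ℝ 1 (deriv g) := by
    have h2 : ContDiff ℝ ((1 + 1 : ℕ) : WithTop ℕ∞) g := by exact_mod_cast hg
    have := ContDiff.iterate_deriv' 1 1 h2
    simpa using this
  have hg'diff : Differentiable ℝ (deriv g) := hg1.differentiable one_ne_zero
  have hmono : Monotone (deriv g) := hg'.monotone
  have hg'0 : deriv g 0 = 0 := by
    have := hg'_odd 0; rw [neg_zero] at this; linarith
  have htangent : ∀ x y : ℝ, g x + deriv g x * (y - x) ≤ g y :=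
    tangent_le_aux g hgdiff hmono
  -- logarithmic bound on increments of g'
  have hlog : ∀ x y : ℝ, 0 < y → y ≤ x →
      deriv g x - deriv g y ≤ C₁ * (Real.log x - Real.log y) := by
    intro x y hy hyx
    have hanti : AntitoneOn (fun v => deriv g v - C₁ * Real.log v) (Set.Ioi 0) := by
      apply antitoneOn_of_deriv_nonpos (convex_Ioi 0)
      · apply ContinuousOn.sub hg'diff.continuous.continuousOn
        exact (Real.continuousOn_log.mono (fun z hz => ne_of_gt hz)).const_smul C₁
      · intro z hz
        rw [interior_Ioi] at hz
        apply DifferentiableAt.differentiableWithinAt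
        exact (hg'diff z).sub (((Real.differentiableAt_log (ne_of_gt hz))).const_mul C₁)
      · intro z hz
        rw [interior_Ioi] at hz
        have hd : deriv (fun v => deriv g v - C₁ * Real.log v) z
            = deriv (deriv g) z - C₁ * z⁻¹ := by
          rw [deriv_fun_sub (hg'diff z)
            (((Real.differentiableAt_log (ne_of_gt hz))).const_mul C₁)]
          rw [deriv_const_mul _ (Real.differentiableAt_log (ne_of_gt hz)),
            Real.deriv_log]
        rw [hd]
        have h1 : z * deriv (deriv g) z ≤ C := hC z hz
        have h2 : C ≤ C₁ := le_max_left _ _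
        have h3 : deriv (deriv g) z ≤ C₁ / z := by
          rw [le_div_iff₀ hz]; nlinarith
        have h4 : C₁ / z = C₁ * z⁻¹ := by ring
        linarith [h3, h4.le]
    have := hanti (Set.mem_Ioi.2 hy) (Set.mem_Ioi.2 (lt_of_lt_of_le hy hyx)) hyx
    simp only at this
    linarith
  -- g' tends to infinity
  have hg'top : Tendsto (deriv g) atTop atTop := by
    apply tendsto_atTop_atTop_of_monotone hmono
    intro b; obtain ⟨x, hx⟩ := hg'_unbdd b; exact ⟨x, hx.le⟩
  -- the key eventual bound
  have hkey : ∀ᶠ V₁ in atTop,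
      Real.sqrt ((deriv g (V₁ / 4) - 1) / C₁) ≤ lam V₁ / V₁ := by
    filter_upwards [eventually_gt_atTop 0, eventually_ge_atTop (2 * |g 0|)]
      with V₁ hV₁ hV₁g
    obtain ⟨hlt, hzero⟩ := hlam V₁ hV₁
    set V₂ := lam V₁ with hV₂def
    have hV₂pos : 0 < V₂ := lt_trans hV₁ hlt
    set t := Vt V₁ V₂ with htdef
    set W : ℝ := (V₁ + V₂) / 2 with hWdef
    set d : ℝ := (V₂ - V₁) / 2 with hddef
    set s : ℝ := t + W with hsdef
    have hd_pos : 0 < d := by simp only [hddef]; linarith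
    have hdW : d < W := by simp only [hddef, hWdef]; linarith
    have htie : deriv g (s - W) + deriv g (s - d) + deriv g (s + W) = 0 := by
      have := hVt V₁ V₂ hV₁ hlt.le
      have e1 : s - W = t := by ring
      have e2 : s - d = t + V₁ := by simp only [hsdef, hWdef, hddef]; ring
      have e3 : s + W = t + V₁ + V₂ := by simp only [hsdef, hWdef]; ring
      rw [e1, e2, e3]; exact this
    -- s ≥ 0
    have hs0 : 0 ≤ s := by
      by_contra hneg
      push_neg at hneg
      have h1 : deriv g (s + W) < deriv g (W - s) := hg' (by linarith)
      have h2 : deriv g (s - W) = - deriv g (W - s) := by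
        rw [show s - W = -(W - s) by ring, hg'_odd]
      have h3 : deriv g (s - d) < 0 := by
        rw [← hg'0]; exact hg' (by linarith)
      linarith
    -- s ≤ d
    have hsd : s ≤ d := by
      by_contra hgt
      push_neg at hgt
      have hspos : 0 < s := lt_of_le_of_lt hd_pos.le hgt
      have h1 : deriv g (W - s) < deriv g (s + W) := hg' (by linarith)
      have h2 : deriv g (s - W) = - deriv g (W - s) := by
        rw [show s - W = -(W - s) by ring, hg'_odd]
      have h3 : 0 < deriv g (s - d) := by
        rw [← hg'0]; exact hg' (by linarith)
      linarith
    -- key relation for g'(d - s)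
    have hrel : deriv g (d - s) = deriv g (s + W) + deriv g (s - W) := by
      have h1 : deriv g (d - s) = - deriv g (s - d) := by
        rw [show d - s = -(s - d) by ring, hg'_odd]
      linarith [htie]
    have hds_nonneg : 0 ≤ deriv g (d - s) := by
      rw [← hg'0]; exact hmono (by linarith)
    -- log bound on g'(d-s)
    have hWs_pos : 0 < W - s := by linarith
    have hlb : deriv g (d - s) ≤ C₁ * (Real.log V₂ - Real.log V₁) := by
      have h1 : deriv g (s - W) = - deriv g (W - s) := by
        rw [show s - W = -(W - s) by ring, hg'_odd]
      have h2 : deriv g (s + W) - deriv g (W - s)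
          ≤ C₁ * (Real.log (s + W) - Real.log (W - s)) :=
        hlog (s + W) (W - s) hWs_pos (by linarith)
      have h3 : Real.log (s + W) ≤ Real.log V₂ := by
        apply Real.log_le_log (by linarith)
        simp only [hWdef, hddef] at hsd ⊢; linarith
      have h4 : Real.log V₁ ≤ Real.log (W - s) := by
        apply Real.log_le_log hV₁
        simp only [hWdef, hddef] at hsd ⊢; linarith
      nlinarith [hC₁pos]
    -- the identity from μ = 0
    have hident : 2 * (g (V₁ / 2) + g W) = g (s - W) + g (s - d) + g (s + W) := by
      have := hμ V₁ V₂
      rw [hzero] at this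
      have e1 : s - W = t := by ring
      have e2 : s - d = t + V₁ := by simp only [hsdef, hWdef, hddef]; ring
      have e3 : s + W = t + V₁ + V₂ := by simp only [hsdef, hWdef]; ring
      rw [e1, e2, e3]
      linarith
    -- three tangent inequalities
    have hi1 : g (s - d) ≤ g 0 + (d - s) * deriv g (d - s) := by
      have he : g (s - d) = g (d - s) := by
        rw [show s - d = -(d - s) by ring, hg_even]
      have ht := htangent (d - s) 0
      have hp : deriv g (d - s) * (0 - (d - s)) = -((d - s) * deriv g (d - s)) := by ring
      rw [he]; linarith
    have hi2 : g (s + W) ≤ g W + s * deriv g (s + W) := by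
      have ht := htangent (s + W) W
      have hp : deriv g (s + W) * (W - (s + W)) = -(s * deriv g (s + W)) := by ring
      linarith
    have hi3 : g (s - W) ≤ g W + s * deriv g (s - W) := by
      have ht := htangent (s - W) (-W)
      rw [hg_even W] at ht
      have hp : deriv g (s - W) * (-W - (s - W)) = -(s * deriv g (s - W)) := by ring
      linarith
    -- combine: 2 g(V₁/2) ≤ g 0 + d * g'(d - s)
    have hupper : 2 * g (V₁ / 2) ≤ g 0 + d * deriv g (d - s) := by
      have hsplit : s * deriv g (s + W) + s * deriv g (s - W) = s * deriv g (d - s) := by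
        rw [hrel]; ring
      have hcollect : (d - s) * deriv g (d - s) + s * deriv g (d - s)
          = d * deriv g (d - s) := by ring
      linarith [hident, hi1, hi2, hi3, hsplit, hcollect]
    -- lower bound: 2 g(V₁/2) ≥ 2 g 0 + (V₁/2) g'(V₁/4)
    have hlower : 2 * g 0 + (V₁ / 2) * deriv g (V₁ / 4) ≤ 2 * g (V₁ / 2) := by
      have h1 := htangent (V₁ / 4) (V₁ / 2)
      have h2 := htangent 0 (V₁ / 4)
      rw [hg'0] at h2
      have hp : deriv g (V₁ / 4) * (V₁ / 2 - V₁ / 4) = (V₁ / 4) * deriv g (V₁ / 4) := by ring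
      have hq : (V₁ / 2) * deriv g (V₁ / 4) = 2 * ((V₁ / 4) * deriv g (V₁ / 4)) := by ring
      linarith
    -- conclude the ratio bound
    have hr : 1 < V₂ / V₁ := (one_lt_div hV₁).2 hlt
    have hlogr : Real.log V₂ - Real.log V₁ ≤ V₂ / V₁ := by
      rw [← Real.log_div (ne_of_gt hV₂pos) (ne_of_gt hV₁)]
      linarith [Real.log_le_sub_one_of_pos (lt_trans one_pos hr), hr]
    have hmain : deriv g (V₁ / 4) - 1 ≤ C₁ * (V₂ / V₁) ^ 2 := by
      have hd2 : d ≤ V₂ / 2 := by simp only [hddef]; linarith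
      have hg0 : -(V₁ / 2) ≤ g 0 := by
        have := abs_nonneg (g 0); have := neg_abs_le (g 0); linarith
      have hstep : (V₁ / 2) * (deriv g (V₁ / 4) - 1) ≤ d * deriv g (d - s) := by
        have hexp : (V₁ / 2) * (deriv g (V₁ / 4) - 1)
            = (V₁ / 2) * deriv g (V₁ / 4) - V₁ / 2 := by ring
        linarith [hupper, hlower, hg0, hexp.le, hexp.ge]
      have hstep2 : d * deriv g (d - s) ≤ (V₂ / 2) * (C₁ * (Real.log V₂ - Real.log V₁)) := by
        apply mul_le_mul hd2 hlb hds_nonneg (by linarith)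
      have hstep3 : (V₂ / 2) * (C₁ * (Real.log V₂ - Real.log V₁))
          ≤ (V₂ / 2) * (C₁ * (V₂ / V₁)) := by
        apply mul_le_mul_of_nonneg_left _ (by linarith)
        exact mul_le_mul_of_nonneg_left hlogr hC₁pos.le
      have hV2V1 : V₂ / 2 = (V₂ / V₁) * (V₁ / 2) := by field_simp
      have : (V₁ / 2) * (deriv g (V₁ / 4) - 1)
          ≤ ((V₂ / V₁) * (V₁ / 2)) * (C₁ * (V₂ / V₁)) := by
        rw [← hV2V1]; linarith
      have hhalf : 0 < V₁ / 2 := by linarith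
      have hthis2 : (V₁ / 2) * (deriv g (V₁ / 4) - 1)
          ≤ (V₁ / 2) * ((V₂ / V₁) * (C₁ * (V₂ / V₁))) := by
        have : ((V₂ / V₁) * (V₁ / 2)) * (C₁ * (V₂ / V₁))
            = (V₁ / 2) * ((V₂ / V₁) * (C₁ * (V₂ / V₁))) := by ring
        linarith [this.le, this.ge]
      have hfin : deriv g (V₁ / 4) - 1 ≤ (V₂ / V₁) * (C₁ * (V₂ / V₁)) :=
        le_of_mul_le_mul_left hthis2 hhalf
      have heq : (V₂ / V₁) * (C₁ * (V₂ / V₁)) = C₁ * (V₂ / V₁) ^ 2 := by ring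
      linarith [heq.le, heq.ge]
    -- take square roots
    have hdiv : (deriv g (V₁ / 4) - 1) / C₁ ≤ (V₂ / V₁) ^ 2 := by
      rw [div_le_iff₀ hC₁pos, mul_comm]; exact hmain
    calc Real.sqrt ((deriv g (V₁ / 4) - 1) / C₁)
        ≤ Real.sqrt ((V₂ / V₁) ^ 2) := Real.sqrt_le_sqrt hdiv
      _ = V₂ / V₁ := Real.sqrt_sq (by positivity)
  -- the bound tends to infinity
  have hBtop : Tendsto (fun V₁ => Real.sqrt ((deriv g (V₁ / 4) - 1) / C₁)) atTop atTop := by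
    apply sqrt_tendsto_atTop.comp
    apply Tendsto.atTop_div_const hC₁pos
    apply tendsto_atTop_add_const_right
    exact hg'top.comp (tendsto_id.atTop_div_const (by norm_num))
  exact tendsto_atTop_mono' atTop hkey hBtop
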